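/- Let I and J be nonempty open intervals of ℝ, and let u : ℝ → ℝ and v : ℝ → ℝ be three times differentiable on I and on J respectively. Then the identity 2u(ξ) − (ξ − η)u'(ξ) = 2v(η) + (ξ − η)v'(η) holds for all ξ ∈ I and η ∈ J if and only if there exist real numbers r₀, r₁, r₂ such that u(ξ) = r₀ξ² + 2r₁ξ + r₂ for all ξ ∈ I and v(η) = r₀η² + 2r₁η + r₂ for all η ∈ J. -/
import Mathlib


/-- On nonempty open intervals `I = (a,b)` and `J = (c,d)`, for `u`, `v` three times
differentiable on `I`, `J` respectively, the identity
`2u(ξ) − (ξ−η)u'(ξ) = 2v(η) + (ξ−η)v'(η)` holds for all `ξ ∈ I`, `η ∈ J`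
iff `u` and `v` are both restrictions of a single quadratic `r₀z² + 2r₁z + r₂`. -/
theorem lee_form_functional_equation
    (a b c d : ℝ) (hab : a < b) (hcd : c < d) (u v : ℝ → ℝ)
    (hu : ∀ x ∈ Set.Ioo a b, DifferentiableAt ℝ u x ∧
        DifferentiableAt ℝ (deriv u) x ∧ DifferentiableAt ℝ (deriv (deriv u)) x)
    (hv : ∀ y ∈ Set.Ioo c d, DifferentiableAt ℝ v y ∧
        DifferentiableAt ℝ (deriv v) y ∧ DifferentiableAt ℝ (deriv (deriv v)) y) :
    (∀ ξ ∈ Set.Ioo a b, ∀ η ∈ Set.Ioo c d,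
        2 * u ξ - (ξ - η) * deriv u ξ = 2 * v η + (ξ - η) * deriv v η)
    ↔ ∃ r0 r1 r2 : ℝ,
        (∀ ξ ∈ Set.Ioo a b, u ξ = r0 * ξ ^ 2 + 2 * r1 * ξ + r2) ∧
        (∀ η ∈ Set.Ioo c d, v η = r0 * η ^ 2 + 2 * r1 * η + r2) := by
  constructor
  · intro h
    set x1 : ℝ := (3*a+b)/4 with hx1def
    set y1 : ℝ := (3*c+d)/4 with hy1def
    set y2 : ℝ := (c+3*d)/4 with hy2def
    have hx1 : x1 ∈ Set.Ioo a b := ⟨by rw [hx1def]; nlinarith, by rw [hx1def]; nlinarith⟩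
    have hy1 : y1 ∈ Set.Ioo c d := ⟨by rw [hy1def]; nlinarith, by rw [hy1def]; nlinarith⟩
    have hy2 : y2 ∈ Set.Ioo c d := ⟨by rw [hy2def]; nlinarith, by rw [hy2def]; nlinarith⟩
    have hD1 : y1 - y2 ≠ 0 := sub_ne_zero.mpr (by rw [hy1def, hy2def]; nlinarith)
    set A : ℝ := (deriv v y1 - deriv v y2) / (y1 - y2) with hAdef
    have hA : A * (y1 - y2) = deriv v y1 - deriv v y2 := div_mul_cancel₀ _ hD1
    set B : ℝ := (2 * v y1 - 2 * v y2 - y1 * deriv v y1 + y2 * deriv v y2) / (y1 - y2)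
      with hBdef
    have hB : B * (y1 - y2) = 2 * v y1 - 2 * v y2 - y1 * deriv v y1 + y2 * deriv v y2 :=
      div_mul_cancel₀ _ hD1
    have hU : ∀ ξ ∈ Set.Ioo a b, deriv u ξ = A * ξ + B := by
      intro ξ hξ
      have e1 := h ξ hξ y1 hy1
      have e2 := h ξ hξ y2 hy2
      refine mul_right_cancel₀ hD1 ?_
      linear_combination e1 - e2 - ξ * hA - hB
    -- now v' is affine with the same slope A
    set x2 : ℝ := (a+3*b)/4 with hx2def
    have hx2 : x2 ∈ Set.Ioo a b := ⟨by rw [hx2def]; nlinarith, by rw [hx2def]; nlinarith⟩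
    have hD2 : x1 - x2 ≠ 0 := sub_ne_zero.mpr (by rw [hx1def, hx2def]; nlinarith)
    have key : ∀ η ∈ Set.Ioo c d, deriv v η * (x1 - x2) =
        2 * u x1 - 2 * u x2 - (x1 - η) * (A * x1 + B) + (x2 - η) * (A * x2 + B) := by
      intro η hη
      have e3 := h x1 hx1 η hη
      have e5 := h x2 hx2 η hη
      rw [hU x1 hx1] at e3
      rw [hU x2 hx2] at e5
      linear_combination e5 - e3
    set B2 : ℝ := deriv v y1 - A * y1 with hB2def
    have hV : ∀ η ∈ Set.Ioo c d, deriv v η = A * η + B2 := by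
      intro η hη
      refine mul_right_cancel₀ hD2 ?_
      linear_combination key η hη - key y1 hy1 + (x1 - x2) * hB2def
    refine ⟨A/2, (B+B2)/4, v y1 - A/2*y1^2 - (B+B2)/2*y1, ?_, ?_⟩
    · intro ξ hξ
      have e := h ξ hξ y1 hy1
      rw [hU ξ hξ, hV y1 hy1] at e
      linear_combination e / 2
    · intro η hη
      have e := h x1 hx1 η hη
      have e2 := h x1 hx1 y1 hy1
      rw [hU x1 hx1, hV η hη] at e
      rw [hU x1 hx1, hV y1 hy1] at e2
      linear_combination (e2 - e) / 2
  · intro ⟨r0, r1, r2, h1, h2⟩ ξ hξ η hη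
    have du : deriv u ξ = 2 * r0 * ξ + 2 * r1 := by
      have heq : u =ᶠ[nhds ξ] fun x => r0 * x ^ 2 + 2 * r1 * x + r2 :=
        ((isOpen_Ioo.eventually_mem hξ).mono fun x hx => h1 x hx)
      rw [heq.deriv_eq]
      have : HasDerivAt (fun x : ℝ => r0 * x ^ 2 + 2 * r1 * x + r2)
          (r0 * (2 * ξ ^ 1) + 2 * r1 * 1) ξ := by
        exact (((hasDerivAt_pow 2 ξ).const_mul r0).add
          ((hasDerivAt_id ξ).const_mul (2 * r1))).add_const r2
      rw [this.deriv]; ring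
    have dv : deriv v η = 2 * r0 * η + 2 * r1 := by
      have heq : v =ᶠ[nhds η] fun x => r0 * x ^ 2 + 2 * r1 * x + r2 :=
        ((isOpen_Ioo.eventually_mem hη).mono fun x hx => h2 x hx)
      rw [heq.deriv_eq]
      have : HasDerivAt (fun x : ℝ => r0 * x ^ 2 + 2 * r1 * x + r2)
          (r0 * (2 * η ^ 1) + 2 * r1 * 1) η := by
        exact (((hasDerivAt_pow 2 η).const_mul r0).add
          ((hasDerivAt_id η).const_mul (2 * r1))).add_const r2
      rw [this.deriv]; ring
    rw [du, dv, h1 ξ hξ, h2 η hη]; ring
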